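/- Let I be a squarefree monomial ideal in S = K[x₁,…,xₙ] over a field K. Suppose that for every three minimal generators x^{H₁}, x^{H₂}, x^{H₃} of I making a special triangle, the monomial x^{H₁∩H₂∩H₃}·x^{H₁∪H₂∪H₃} lies in I². Then x·I ∩ (I² : x) ⊆ I² for every variable x ∈ {x₁,…,xₙ}. -/

import Mathlib

open MvPolynomial CategoryTheory

/-- `Δ` is a simplicial complex on the vertex set `V`: it is closed under subsets,
contains the empty face and contains every singleton. -/
def IsSimplicialComplex {V : Type} (Δ : Set (Finset V)) : Prop :=
  (∀ F ∈ Δ, ∀ G, G ⊆ F → G ∈ Δ) ∧ (∅ : Finset V) ∈ Δ ∧ ∀ v : V, ({v} : Finset V) ∈ Δ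

/-- The Stanley–Reisner ideal of `Δ`: the ideal generated by the squarefree monomials
`∏_{i ∈ F} x_i` for the non-faces `F` of `Δ`. -/
noncomputable def SRIdeal (K : Type) [Field K] {V : Type} (Δ : Set (Finset V)) :
    Ideal (MvPolynomial V K) :=
  Ideal.span ((fun F : Finset V => ∏ i ∈ F, X i) '' {F | F ∉ Δ})

/-- The irrelevant maximal ideal `m = (x_v : v ∈ V)` of the polynomial ring. -/
noncomputable def mxIdeal (K : Type) [Field K] (V : Type) : Ideal (MvPolynomial V K) :=
  Ideal.span (Set.range (X : V → MvPolynomial V K))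

/-- The depth of the ideal `m` on the ring `A`: the supremum of the lengths of
regular sequences on `A` contained in `m`. -/
noncomputable def ringDepth (A : Type) [CommRing A] (m : Ideal A) : ℕ∞ :=
  sSup {d : ℕ∞ | ∃ rs : List A, (rs.length : ℕ∞) = d ∧ (∀ r ∈ rs, r ∈ m) ∧
    RingTheory.Sequence.IsRegular A rs}

/-- `S ⧸ J` is Cohen–Macaulay: its depth (with respect to the image of the maximal
ideal `m`) equals its Krull dimension. -/
def IsCMQuot (S : Type) [CommRing S] (m J : Ideal S) : Prop :=
  ((ringDepth (S ⧸ J) (m.map (Ideal.Quotient.mk J)) : ℕ∞) : WithBot ℕ∞) = ringKrullDim (S ⧸ J)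

/-- The second symbolic power of an ideal `I`: the intersection of `P ^ 2` over the
minimal primes `P` of `I`. -/
noncomputable def symb2 {S : Type} [CommRing S] (I : Ideal S) : Ideal S :=
  ⨅ P ∈ I.minimalPrimes, P ^ 2

/-- `Ext_A^i(A/m, A)`. -/
noncomputable def extPow (A : Type) [CommRing A] (m : Ideal A) (i : ℕ) : ModuleCat A :=
  ((Ext A (ModuleCat A) i).obj (Opposite.op (ModuleCat.of A (A ⧸ m)))).obj (ModuleCat.of A A)

/-- `S ⧸ J` (with maximal ideal the image of `m`) is Gorenstein: it is Cohen–Macaulay and,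
with `d = dim S/J` and `k = (S/J)/m` the residue field, the Bass numbers are those of a
Gorenstein ring: `Ext^i(k, S/J) = 0` for `i ≠ d` and `Ext^d(k, S/J) ≅ k`. -/
def IsGorQuot (S : Type) [CommRing S] (m J : Ideal S) : Prop :=
  IsCMQuot S m J ∧ ∃ d : ℕ, ((d : ℕ∞) : WithBot ℕ∞) = ringKrullDim (S ⧸ J) ∧
    (∀ i : ℕ, i ≠ d → Subsingleton (extPow (S ⧸ J) (m.map (Ideal.Quotient.mk J)) i)) ∧
    Nonempty ((extPow (S ⧸ J) (m.map (Ideal.Quotient.mk J)) d) ≃ₗ[S ⧸ J]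
      ((S ⧸ J) ⧸ (m.map (Ideal.Quotient.mk J))))

/-- `S ⧸ J` is quasi-Buchsbaum: `m` annihilates the local cohomology module
`H_m^i(S/J)` for all `i < dim S/J`. -/
def IsQuasiBuchsbaum (S : Type) [CommRing S] (m J : Ideal S) : Prop :=
  ∀ i : ℕ, ((i : ℕ∞) : WithBot ℕ∞) < ringKrullDim (S ⧸ J) →
    ∀ r ∈ m, ∀ x : (localCohomology m i).obj (ModuleCat.of S (S ⧸ J)), r • x = 0

/-- `S ⧸ J` has finite local cohomology (FLC): the local cohomology module `H_m^i(S/J)`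
has finite length (equivalently, is both Noetherian and Artinian) for all `i < dim S/J`. -/
def HasFLC (S : Type) [CommRing S] (m J : Ideal S) : Prop :=
  ∀ i : ℕ, ((i : ℕ∞) : WithBot ℕ∞) < ringKrullDim (S ⧸ J) →
    IsNoetherian S ((localCohomology m i).obj (ModuleCat.of S (S ⧸ J))) ∧
    IsArtinian S ((localCohomology m i).obj (ModuleCat.of S (S ⧸ J)))

/-- Serre's condition `(S₂)`: for every prime `P` of `A`,
`depth A_P ≥ min (dim A_P) 2`. -/
def SerreS2 (A : Type) [CommRing A] : Prop :=
  ∀ (P : Ideal A) (hP : P.IsPrime),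
    haveI := hP
    min (ringKrullDim (Localization.AtPrime P)) 2 ≤
      ((ringDepth (Localization.AtPrime P)
        (IsLocalRing.maximalIdeal (Localization.AtPrime P)) : ℕ∞) : WithBot ℕ∞)

/-- The link of a face `F` in `Δ`. -/
def linkOf {V : Type} [DecidableEq V] (Δ : Set (Finset V)) (F : Finset V) : Set (Finset V) :=
  {H | H ∈ Δ ∧ H ∩ F = ∅ ∧ H ∪ F ∈ Δ}

/-- The 1-skeleton of the complex `Γ` (the graph on the vertices of `Γ` whose edges are the
1-dimensional faces of `Γ`) is connected of diameter at most 2: any two distinct vertices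
are joined by a path of length at most 2. -/
def skeletonDiamLE2 {V : Type} [DecidableEq V] (Γ : Set (Finset V)) : Prop :=
  ∀ u v : V, ({u} : Finset V) ∈ Γ → ({v} : Finset V) ∈ Γ → u ≠ v →
    (({u, v} : Finset V) ∈ Γ ∨ ∃ w : V, ({u, w} : Finset V) ∈ Γ ∧ ({w, v} : Finset V) ∈ Γ)

/-- `linkOf Δ F` has dimension at least 1, i.e. it has a face with at least 2 vertices. -/
def linkDimGE1 {V : Type} [DecidableEq V] (Δ : Set (Finset V)) (F : Finset V) : Prop :=
  ∃ H ∈ linkOf Δ F, 2 ≤ H.card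

/-- The squarefree monomial ideal generated by the monomials `x^H = ∏_{a ∈ H} x_a`, `H ∈ E`. -/
noncomputable def sqfIdeal (K : Type) [Field K] {V : Type} (E : Set (Finset V)) :
    Ideal (MvPolynomial V K) :=
  Ideal.span ((fun H : Finset V => ∏ a ∈ H, X a) '' E)

/-- The edges `H₁, H₂, H₃` make the special triangle `{i, j, k}`. -/
def MakeSpecialTriangle {V : Type} [DecidableEq V] (H₁ H₂ H₃ : Finset V) (i j k : V) : Prop :=
  i ≠ j ∧ j ≠ k ∧ i ≠ k ∧
  H₁ ∩ ({i, j, k} : Finset V) = {j, k} ∧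
  H₂ ∩ ({i, j, k} : Finset V) = {i, k} ∧
  H₃ ∩ ({i, j, k} : Finset V) = {i, j}


namespace Stmt12Aux

variable {n : ℕ} {K : Type} [Field K]

noncomputable def ind (H : Finset (Fin n)) : Fin n →₀ ℕ := ∑ a ∈ H, Finsupp.single a 1

lemma ind_apply (H : Finset (Fin n)) (b : Fin n) : ind H b = if b ∈ H then 1 else 0 := by
  classical
  simp [ind, Finsupp.finset_sum_apply, Finsupp.single_apply]

lemma ind_insert (a : Fin n) (H : Finset (Fin n)) (ha : a ∉ H) :
    ind (insert a H) = Finsupp.single a 1 + ind H := by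
  rw [ind, Finset.sum_insert ha]; rfl

lemma prod_X (H : Finset (Fin n)) :
    (∏ a ∈ H, X a : MvPolynomial (Fin n) K) = monomial (ind H) 1 := by
  classical
  induction H using Finset.induction_on with
  | empty => simp [ind]
  | insert _ _ ha ih =>
      rw [Finset.prod_insert ha, ih, X, monomial_mul, one_mul, ind_insert _ _ ha]

lemma mem_span_monomials (D : Set (Fin n →₀ ℕ)) (f : MvPolynomial (Fin n) K) :
    f ∈ Ideal.span ((fun d => (monomial d 1 : MvPolynomial (Fin n) K)) '' D) ↔
      ∀ m ∈ f.support, ∃ d ∈ D, d ≤ m := by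
  classical
  constructor
  · intro hf
    let T : Ideal (MvPolynomial (Fin n) K) :=
      { carrier := {f | ∀ m ∈ f.support, ∃ d ∈ D, d ≤ m}
        add_mem' := by
          intro a b ha hb m hm
          rcases Finset.mem_union.1 (MvPolynomial.support_add hm) with h | h
          exacts [ha m h, hb m h]
        zero_mem' := by simp
        smul_mem' := by
          intro r f hf m hm
          have h := MvPolynomial.support_mul r f hm
          rw [Finset.mem_add] at h
          obtain ⟨m₁, hm₁, m₂, hm₂, rfl⟩ := h
          obtain ⟨d, hd, hle⟩ := hf m₂ hm₂
          exact ⟨d, hd, le_trans hle (le_add_self)⟩ }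
    have : Ideal.span ((fun d => (monomial d 1 : MvPolynomial (Fin n) K)) '' D) ≤ T := by
      rw [Ideal.span_le]
      rintro - ⟨d, hd, rfl⟩ m hm
      rw [MvPolynomial.support_monomial, if_neg one_ne_zero, Finset.mem_singleton] at hm
      exact ⟨d, hd, hm ▸ le_refl d⟩
    exact this hf
  · intro h
    rw [← MvPolynomial.support_sum_monomial_coeff f]
    refine Ideal.sum_mem _ ?_
    intro m hm
    obtain ⟨d, hd, hle⟩ := h m hm
    have : (monomial m (coeff m f) : MvPolynomial (Fin n) K)
        = monomial (m - d) (coeff m f) * monomial d 1 := by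
      rw [monomial_mul, mul_one, tsub_add_cancel_of_le hle]
    rw [this]
    exact Ideal.mul_mem_left _ _ (Ideal.subset_span ⟨d, hd, rfl⟩)



lemma sqfIdeal_eq (E : Set (Finset (Fin n))) :
    sqfIdeal K E
      = Ideal.span ((fun d => (monomial d 1 : MvPolynomial (Fin n) K)) '' (ind '' E)) := by
  rw [sqfIdeal, Set.image_image]
  congr 1
  exact Set.image_congr fun H _ => prod_X H

lemma mem_sqf (E : Set (Finset (Fin n))) (f : MvPolynomial (Fin n) K) :
    f ∈ sqfIdeal K E ↔ ∀ m ∈ f.support, ∃ H ∈ E, ind H ≤ m := by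
  rw [sqfIdeal_eq, mem_span_monomials]
  constructor <;> intro h m hm
  · obtain ⟨d, ⟨H, hH, rfl⟩, hle⟩ := h m hm; exact ⟨H, hH, hle⟩
  · obtain ⟨H, hH, hle⟩ := h m hm; exact ⟨ind H, ⟨H, hH, rfl⟩, hle⟩

lemma sq_eq (E : Set (Finset (Fin n))) : (sqfIdeal K E)^2 =
    Ideal.span ((fun d => (monomial d 1 : MvPolynomial (Fin n) K)) ''
      {e | ∃ H₁ ∈ E, ∃ H₂ ∈ E, ind H₁ + ind H₂ = e}) := by
  rw [pow_two, sqfIdeal_eq, Ideal.span_mul_span']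
  congr 1
  ext f
  simp only [Set.mem_mul, Set.mem_image, Set.mem_setOf_eq]
  constructor
  · rintro ⟨a, ⟨d₁, ⟨H₁, h1, rfl⟩, rfl⟩, b, ⟨d₂, ⟨H₂, h2, rfl⟩, rfl⟩, rfl⟩
    exact ⟨ind H₁ + ind H₂, ⟨H₁, h1, H₂, h2, rfl⟩, by rw [monomial_mul, mul_one]⟩
  · rintro ⟨e, ⟨H₁, h1, H₂, h2, rfl⟩, rfl⟩
    exact ⟨_, ⟨ind H₁, ⟨H₁, h1, rfl⟩, rfl⟩, _, ⟨ind H₂, ⟨H₂, h2, rfl⟩, rfl⟩,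
      by rw [monomial_mul, mul_one]⟩

lemma mem_sq (E : Set (Finset (Fin n))) (f : MvPolynomial (Fin n) K) :
    f ∈ (sqfIdeal K E)^2 ↔
      ∀ m ∈ f.support, ∃ H₁ ∈ E, ∃ H₂ ∈ E, ind H₁ + ind H₂ ≤ m := by
  rw [sq_eq, mem_span_monomials]
  constructor <;> intro h m hm
  · obtain ⟨d, ⟨H₁, h1, H₂, h2, rfl⟩, hle⟩ := h m hm; exact ⟨H₁, h1, H₂, h2, hle⟩
  · obtain ⟨H₁, h1, H₂, h2, hle⟩ := h m hm; exact ⟨_, ⟨H₁, h1, H₂, h2, rfl⟩, hle⟩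



lemma key (E : Set (Finset (Fin n)))
    (hmin : ∀ H ∈ E, ∀ H' ∈ E, H ⊆ H' → H = H')
    (hsp' : ∀ H₁ ∈ E, ∀ H₂ ∈ E, ∀ H₃ ∈ E, ∀ i j k : Fin n,
      MakeSpecialTriangle H₁ H₂ H₃ i j k →
      ∃ G₁ ∈ E, ∃ G₂ ∈ E, ind G₁ + ind G₂ ≤ ind (H₁ ∩ H₂ ∩ H₃) + ind (H₁ ∪ H₂ ∪ H₃))
    (v : Fin n) (d : Fin n →₀ ℕ)
    (H : Finset (Fin n)) (hH : H ∈ E) (hHd : ind H ≤ d)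
    (H₁ : Finset (Fin n)) (h1 : H₁ ∈ E) (H₂ : Finset (Fin n)) (h2 : H₂ ∈ E)
    (h12 : ind H₁ + ind H₂ ≤ Finsupp.single v 1 + (Finsupp.single v 1 + d)) :
    ∃ G₁ ∈ E, ∃ G₂ ∈ E, ind G₁ + ind G₂ ≤ Finsupp.single v 1 + d := by
  classical
  rw [Finsupp.le_def] at h12 hHd
  simp only [Finsupp.add_apply, Finsupp.single_apply, ind_apply] at h12 hHd
  by_cases hcase : (if v ∈ H₁ then 1 else 0) + (if v ∈ H₂ then 1 else 0) ≤ 1 + d v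
  · refine ⟨H₁, h1, H₂, h2, Finsupp.le_def.2 fun a => ?_⟩
    simp only [Finsupp.add_apply, Finsupp.single_apply, ind_apply]
    by_cases hav : v = a
    · subst hav; simpa using hcase
    · have := h12 a; simp only [if_neg hav] at this ⊢; omega
  · -- v ∈ H₁, v ∈ H₂, d v = 0, v ∉ H
    have hv12 := h12 v
    simp only [if_pos rfl] at hv12
    have hv1 : v ∈ H₁ := by
      by_contra h; rw [if_neg h] at hcase
      exact hcase (by split <;> omega)
    have hv2 : v ∈ H₂ := by
      by_contra h; rw [if_pos hv1, if_neg h] at hcase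
      exact hcase (by omega)
    have hdv : d v = 0 := by
      rw [if_pos hv1, if_pos hv2] at hcase; omega
    have hvH : v ∉ H := by
      intro h; have := hHd v; simp [h, hdv] at this
    -- for a ≠ v : ind H₁ a + ind H₂ a ≤ d a
    have hne : ∀ a : Fin n, v ≠ a →
        (if a ∈ H₁ then 1 else 0) + (if a ∈ H₂ then 1 else 0) ≤ d a := by
      intro a ha; have := h12 a; simp only [if_neg ha] at this; omega
    by_cases hA : H ∩ H₂ ⊆ H₁
    · refine ⟨H, hH, H₂, h2, Finsupp.le_def.2 fun a => ?_⟩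
      simp only [Finsupp.add_apply, Finsupp.single_apply, ind_apply]
      by_cases hav : v = a
      · subst hav; simp [hvH, hv2, hdv]
      · have h3 := hne a hav
        have h4 := hHd a
        have h5 : a ∈ H → a ∈ H₂ → a ∈ H₁ := fun x y => hA (Finset.mem_inter.2 ⟨x, y⟩)
        simp only [if_neg hav]
        by_cases haH : a ∈ H <;> by_cases ha1 : a ∈ H₁ <;> by_cases ha2 : a ∈ H₂
        all_goals first
          | exact absurd (h5 haH ha2) ha1
          | (simp only [haH, ha1, ha2, if_true, if_false] at h3 h4 ⊢; omega)
    · by_cases hB : H ∩ H₁ ⊆ H₂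
      · refine ⟨H, hH, H₁, h1, Finsupp.le_def.2 fun a => ?_⟩
        simp only [Finsupp.add_apply, Finsupp.single_apply, ind_apply]
        by_cases hav : v = a
        · subst hav; simp [hvH, hv1, hdv]
        · have h3 := hne a hav
          have h4 := hHd a
          have h5 : a ∈ H → a ∈ H₁ → a ∈ H₂ := fun x y => hB (Finset.mem_inter.2 ⟨x, y⟩)
          simp only [if_neg hav]
          by_cases haH : a ∈ H <;> by_cases ha1 : a ∈ H₁ <;> by_cases ha2 : a ∈ H₂
          all_goals first
            | exact absurd (h5 haH ha1) ha2
            | (simp only [haH, ha1, ha2, if_true, if_false] at h3 h4 ⊢; omega)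
      · obtain ⟨j, hj⟩ := Finset.not_subset.1 hA
        obtain ⟨k, hk⟩ := Finset.not_subset.1 hB
        obtain ⟨hjH, hj2⟩ := Finset.mem_inter.1 hj.1
        have hj1 : j ∉ H₁ := hj.2
        obtain ⟨hkH, hk1⟩ := Finset.mem_inter.1 hk.1
        have hk2 : k ∉ H₂ := hk.2
        have htri : MakeSpecialTriangle H H₁ H₂ v j k := by
          refine ⟨fun h => hvH (h ▸ hjH), fun h => hj1 (h ▸ hk1), fun h => hvH (h ▸ hkH),
            ?_, ?_, ?_⟩
          · ext a
            simp only [Finset.mem_inter, Finset.mem_insert, Finset.mem_singleton]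
            constructor
            · rintro ⟨haX, rfl | rfl | rfl⟩
              · exact absurd haX hvH
              · exact Or.inl rfl
              · exact Or.inr rfl
            · rintro (rfl | rfl)
              · exact ⟨hjH, Or.inr (Or.inl rfl)⟩
              · exact ⟨hkH, Or.inr (Or.inr rfl)⟩
          · ext a
            simp only [Finset.mem_inter, Finset.mem_insert, Finset.mem_singleton]
            constructor
            · rintro ⟨haX, rfl | rfl | rfl⟩
              · exact Or.inl rfl
              · exact absurd haX hj1
              · exact Or.inr rfl
            · rintro (rfl | rfl)
              · exact ⟨hv1, Or.inl rfl⟩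
              · exact ⟨hk1, Or.inr (Or.inr rfl)⟩
          · ext a
            simp only [Finset.mem_inter, Finset.mem_insert, Finset.mem_singleton]
            constructor
            · rintro ⟨haX, rfl | rfl | rfl⟩
              · exact Or.inl rfl
              · exact Or.inr rfl
              · exact absurd haX hk2
            · rintro (rfl | rfl)
              · exact ⟨hv2, Or.inl rfl⟩
              · exact ⟨hj2, Or.inr (Or.inl rfl)⟩
        obtain ⟨G₁, hG1, G₂, hG2, hle⟩ := hsp' H hH H₁ h1 H₂ h2 v j k htri
        refine ⟨G₁, hG1, G₂, hG2, le_trans hle (Finsupp.le_def.2 fun a => ?_)⟩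
        simp only [Finsupp.add_apply, Finsupp.single_apply, ind_apply,
          Finset.mem_inter, Finset.mem_union]
        by_cases hav : v = a
        · subst hav; simp [hvH, hv1, hdv]
        · have h3 := hne a hav
          have h4 := hHd a
          simp only [if_neg hav]
          by_cases haH : a ∈ H <;> by_cases ha1 : a ∈ H₁ <;> by_cases ha2 : a ∈ H₂
          all_goals
            simp only [haH, ha1, ha2, if_true, if_false, true_and, and_true, false_and,
              and_false, true_or, or_true, false_or, or_false] at h3 h4 ⊢
          all_goals omega


end Stmt12Aux

open Stmt12Aux in
/-- If for every special triangle made by minimal generators `H₁, H₂, H₃` of a squarefree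
monomial ideal `I` the monomial `x^{H₁∩H₂∩H₃} · x^{H₁∪H₂∪H₃}` lies in `I²`, then
`x·I ∩ (I² : x) ⊆ I²` for every variable `x`. -/
theorem stmt12 (n : ℕ) (K : Type) [Field K] (E : Set (Finset (Fin n)))
    (hmin : ∀ H ∈ E, ∀ H' ∈ E, H ⊆ H' → H = H')
    (hsp : ∀ H₁ ∈ E, ∀ H₂ ∈ E, ∀ H₃ ∈ E, ∀ i j k : Fin n,
      MakeSpecialTriangle H₁ H₂ H₃ i j k →
        (∏ a ∈ H₁ ∩ H₂ ∩ H₃, (X a : MvPolynomial (Fin n) K)) *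
          (∏ a ∈ H₁ ∪ H₂ ∪ H₃, (X a : MvPolynomial (Fin n) K)) ∈ (sqfIdeal K E) ^ 2) :
    ∀ v : Fin n,
      Ideal.span {(X v : MvPolynomial (Fin n) K)} * sqfIdeal K E ⊓
        Submodule.colon ((sqfIdeal K E) ^ 2) (Ideal.span {(X v : MvPolynomial (Fin n) K)}) ≤
      (sqfIdeal K E) ^ 2 := by
  classical
  intro v f hf
  obtain ⟨hf1, hf2⟩ := hf
  obtain ⟨g, hg, hfg⟩ := Ideal.mem_span_singleton_mul.1 hf1
  have hx : (X v : MvPolynomial (Fin n) K) ∈ Ideal.span {(X v : MvPolynomial (Fin n) K)} :=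
    Ideal.subset_span rfl
  have h2 : f * X v ∈ (sqfIdeal K E) ^ 2 := by
    have := Submodule.mem_colon.1 hf2 (X v) hx
    rwa [smul_eq_mul] at this
  subst hfg
  have h2' : X v * (X v * g) ∈ (sqfIdeal K E) ^ 2 := by rwa [mul_comm] at h2
  -- translate the special-triangle hypothesis
  have hsp' : ∀ H₁ ∈ E, ∀ H₂ ∈ E, ∀ H₃ ∈ E, ∀ i j k : Fin n,
      MakeSpecialTriangle H₁ H₂ H₃ i j k →
      ∃ G₁ ∈ E, ∃ G₂ ∈ E, ind G₁ + ind G₂ ≤ ind (H₁ ∩ H₂ ∩ H₃) + ind (H₁ ∪ H₂ ∪ H₃) := by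
    intro H₁ hh1 H₂ hh2 H₃ hh3 i j k htri
    have hmem := hsp H₁ hh1 H₂ hh2 H₃ hh3 i j k htri
    rw [prod_X, prod_X, monomial_mul, mul_one] at hmem
    have hsupp : ind (H₁ ∩ H₂ ∩ H₃) + ind (H₁ ∪ H₂ ∪ H₃) ∈
        (monomial (ind (H₁ ∩ H₂ ∩ H₃) + ind (H₁ ∪ H₂ ∪ H₃)) (1 : K)).support := by
      rw [MvPolynomial.support_monomial, if_neg one_ne_zero]
      exact Finset.mem_singleton_self _
    obtain ⟨G₁, hG1, G₂, hG2, hle⟩ := (mem_sq E _).1 hmem _ hsupp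
    exact ⟨G₁, hG1, G₂, hG2, hle⟩
  rw [mem_sq]
  intro m hm
  have hm' := MvPolynomial.support_mul (X v) g hm
  rw [MvPolynomial.support_X, Finset.mem_add] at hm'
  obtain ⟨b, hb, m', hm', rfl⟩ := hm'
  rw [Finset.mem_singleton] at hb
  subst hb
  obtain ⟨H, hH, hHd⟩ := (mem_sqf E g).1 hg m' hm'
  have hcoeff : coeff (Finsupp.single v 1 + (Finsupp.single v 1 + m')) (X v * (X v * g)) ≠ 0 := by
    rw [coeff_X_mul, coeff_X_mul]
    exact MvPolynomial.mem_support_iff.1 hm'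
  have hmem2 : Finsupp.single v 1 + (Finsupp.single v 1 + m') ∈ (X v * (X v * g)).support :=
    MvPolynomial.mem_support_iff.2 hcoeff
  obtain ⟨H₁, h1, H₂, h2'', hle⟩ := (mem_sq E _).1 h2' _ hmem2
  obtain ⟨G₁, hG1, G₂, hG2, hle'⟩ := key E hmin hsp' v m' H hH hHd H₁ h1 H₂ h2'' hle
  exact ⟨G₁, hG1, G₂, hG2, hle'⟩
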